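/- Let n ≥ 2 and let g ∈ Matrix (Fin n) (Fin n) ℝ be symmetric and invertible. Suppose f : Matrix (Fin n) (Fin n) ℝ →ₗ[ℝ] ℝ is an ℝ-linear functional satisfying f (P * A * Pᵀ) = f A for every matrix A and every g-orthogonal matrix P (i.e., every P with Pᵀ * g * P = g). Then there exists c ∈ ℝ such that f A = c * trace(A * g) for all A. -/

import Mathlib

open Matrix

section Aux
variable {n : ℕ}


lemma myTrace_mul_std (N : Matrix (Fin n) (Fin n) ℝ) (i j : Fin n) :
    (N * Matrix.single j i 1).trace = N i j := by
  rw [Matrix.trace, Finset.sum_eq_single i]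
  · simp
  · intro b _ hb
    simpa using Matrix.mul_single_apply_of_ne (c := (1:ℝ)) j i b b hb N
  · simp

lemma myTrace_ext {N C : Matrix (Fin n) (Fin n) ℝ}
    (h : ∀ A, (N * A).trace = (C * A).trace) : N = C := by
  ext i j
  have := h (Matrix.single j i 1)
  rwa [myTrace_mul_std, myTrace_mul_std] at this

lemma myRep (f : Matrix (Fin n) (Fin n) ℝ →ₗ[ℝ] ℝ) :
    ∃ N : Matrix (Fin n) (Fin n) ℝ, ∀ A, f A = (N * A).trace := by
  refine ⟨Matrix.of fun i j => f (Matrix.single j i 1), fun A => ?_⟩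
  conv_lhs => rw [matrix_eq_sum_single A]
  rw [map_sum]
  have h1 : ∀ i, f (∑ j : Fin n, Matrix.single i j (A i j))
      = ∑ j, A i j * f (Matrix.single i j 1) := by
    intro i; rw [map_sum]
    refine Finset.sum_congr rfl (fun j _ => ?_)
    have h2 : Matrix.single i j (A i j) = A i j • Matrix.single i j (1:ℝ) := by
      rw [smul_single, smul_eq_mul, mul_one]
    rw [h2, LinearMap.map_smul, smul_eq_mul]
  simp_rw [h1]
  rw [Matrix.trace]
  simp only [Matrix.diag_apply, Matrix.mul_apply, Matrix.of_apply]
  rw [Finset.sum_comm]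
  refine Finset.sum_congr rfl (fun i _ => Finset.sum_congr rfl (fun j _ => by ring))


lemma myT (v w : Fin n → ℝ) : (vecMulVec v w)ᵀ = vecMulVec w v := by
  ext i j; simp [vecMulVec_apply, transpose_apply, mul_comm]

lemma myML (A : Matrix (Fin n) (Fin n) ℝ) (v w : Fin n → ℝ) :
    A * vecMulVec v w = vecMulVec (A *ᵥ v) w := by
  ext i j
  simp only [Matrix.mul_apply, vecMulVec_apply, Matrix.mulVec, dotProduct]
  rw [Finset.sum_mul]
  exact Finset.sum_congr rfl (fun k _ => by ring)

lemma myMR (A : Matrix (Fin n) (Fin n) ℝ) (v w : Fin n → ℝ) :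
    vecMulVec v w * A = vecMulVec v (w ᵥ* A) := by
  ext i j
  simp only [Matrix.mul_apply, vecMulVec_apply, Matrix.vecMul, dotProduct]
  rw [Finset.mul_sum]
  exact Finset.sum_congr rfl (fun k _ => by ring)

lemma myMM (a b c d : Fin n → ℝ) :
    vecMulVec a b * vecMulVec c d = (b ⬝ᵥ c) • vecMulVec a d := by
  ext i j
  simp only [Matrix.mul_apply, vecMulVec_apply, Matrix.smul_apply, dotProduct, smul_eq_mul,
    Finset.sum_mul, Finset.mul_sum]
  exact Finset.sum_congr rfl (fun k _ => by ring)

-- reflection is g-orthogonal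
lemma myRefl (g : Matrix (Fin n) (Fin n) ℝ) (hg : gᵀ = g) (v : Fin n → ℝ)
    (hq : v ⬝ᵥ g *ᵥ v ≠ 0) :
    (1 - (2 / (v ⬝ᵥ g *ᵥ v)) • vecMulVec v (g *ᵥ v))ᵀ * g *
      (1 - (2 / (v ⬝ᵥ g *ᵥ v)) • vecMulVec v (g *ᵥ v)) = g := by
  set q := v ⬝ᵥ g *ᵥ v with hqdef
  set s := 2 / q with hs
  set w := g *ᵥ v with hw
  have hvg : v ᵥ* g = w := by rw [← hg, vecMul_transpose, hw]
  have hT : (1 - s • vecMulVec v w)ᵀ = 1 - s • vecMulVec w v := by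
    rw [transpose_sub, transpose_one, transpose_smul, myT]
  rw [hT]
  have e1 : vecMulVec w v * g = vecMulVec w w := by rw [myMR, hvg]
  have e2 : g * vecMulVec v w = vecMulVec w w := by rw [myML, hw]
  have e3 : vecMulVec w w * vecMulVec v w = q • vecMulVec w w := by
    rw [myMM]
    congr 1
    rw [hqdef, dotProduct_comm]
  have hsq : (s * q) • vecMulVec w w = (2:ℝ) • vecMulVec w w := by
    congr 1
    rw [hs]; field_simp
  have expand : (1 - s • vecMulVec w v) * g * (1 - s • vecMulVec v w)
      = g - s • (vecMulVec w v * g) - s • (g * vecMulVec v w)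
        + (s*s) • (vecMulVec w v * g * vecMulVec v w) := by
    simp only [sub_mul, mul_sub, one_mul, mul_one, Matrix.smul_mul, Matrix.mul_smul, smul_smul]
    abel
  rw [expand, e1, e2, e3, smul_smul]
  have hss : s * s * q = s + s := by
    rw [hs]; field_simp; ring
  rw [hss]
  module

lemma myQuad3 {a b c t₁ t₂ t₃ : ℝ} (h12 : t₁ ≠ t₂) (h13 : t₁ ≠ t₃) (h23 : t₂ ≠ t₃)
    (e1 : a*t₁^2 + b*t₁ + c = 0) (e2 : a*t₂^2 + b*t₂ + c = 0)
    (e3 : a*t₃^2 + b*t₃ + c = 0) : a = 0 := by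
  have d12 : a*(t₁+t₂) + b = 0 := by
    have h : (t₁ - t₂) * (a*(t₁+t₂) + b) = 0 := by linear_combination e1 - e2
    rcases mul_eq_zero.mp h with h | h
    · exact absurd (sub_eq_zero.mp h) h12
    · exact h
  have d13 : a*(t₁+t₃) + b = 0 := by
    have h : (t₁ - t₃) * (a*(t₁+t₃) + b) = 0 := by linear_combination e1 - e3
    rcases mul_eq_zero.mp h with h | h
    · exact absurd (sub_eq_zero.mp h) h13
    · exact h
  have h : a * (t₂ - t₃) = 0 := by linear_combination d12 - d13
  rcases mul_eq_zero.mp h with h | h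
  · exact h
  · exact absurd (sub_eq_zero.mp h) h23

lemma myTwo {a b c : ℝ} (ha : a ≠ 0) :
    ∃ t₁ t₂ : ℝ, t₁ ≠ t₂ ∧ a*t₁^2 + b*t₁ + c ≠ 0 ∧ a*t₂^2 + b*t₂ + c ≠ 0 := by
  by_contra h
  push_neg at h
  by_cases h0 : a*0^2 + b*0 + c = 0
  · by_cases h1 : a*1^2 + b*1 + c = 0
    · by_cases h2 : a*2^2 + b*2 + c = 0
      · exact ha (myQuad3 (by norm_num) (by norm_num) (by norm_num) h0 h1 h2)
      · have h3 := h 2 3 (by norm_num) h2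
        exact ha (myQuad3 (by norm_num) (by norm_num) (by norm_num) h0 h1 h3)
    · have h2 := h 1 2 (by norm_num) h1
      have h3 := h 1 3 (by norm_num) h1
      exact ha (myQuad3 (by norm_num) (by norm_num) (by norm_num) h0 h2 h3)
  · have h1 := h 0 1 (by norm_num) h0
    have h2 := h 0 2 (by norm_num) h0
    have h3 := h 0 3 (by norm_num) h0
    exact ha (myQuad3 (by norm_num) (by norm_num) (by norm_num) h1 h2 h3)

end Aux

theorem linear_invariant_proportional_to_trace
    {n : ℕ} (hn : 2 ≤ n) (g : Matrix (Fin n) (Fin n) ℝ)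
    (hg : gᵀ = g) (hgdet : IsUnit g.det)
    (f : Matrix (Fin n) (Fin n) ℝ →ₗ[ℝ] ℝ)
    (hf : ∀ (A P : Matrix (Fin n) (Fin n) ℝ), Pᵀ * g * P = g → f (P * A * Pᵀ) = f A) :
    ∃ c : ℝ, ∀ A : Matrix (Fin n) (Fin n) ℝ, f A = c * (A * g).trace := by
  haveI : Nonempty (Fin n) := ⟨⟨0, lt_of_lt_of_le two_pos hn⟩⟩
  have hginv : g⁻¹ * g = 1 := nonsing_inv_mul g hgdet
  have hginv' : g * g⁻¹ = 1 := mul_nonsing_inv g hgdet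
  have hgne : g.det ≠ 0 := hgdet.ne_zero
  -- symmetry of the bilinear form
  have hsym : ∀ a b : Fin n → ℝ, a ⬝ᵥ g *ᵥ b = b ⬝ᵥ g *ᵥ a := by
    intro a b
    rw [dotProduct_mulVec, ← hg, vecMul_transpose, hg, dotProduct_comm]
  obtain ⟨N, hN⟩ := myRep f
  set M := g⁻¹ * N with hMdef
  have hNM : N = g * M := by
    rw [hMdef, ← Matrix.mul_assoc, hginv', Matrix.one_mul]
  -- M commutes with every g-orthogonal P
  have hcomm : ∀ P : Matrix (Fin n) (Fin n) ℝ, Pᵀ * g * P = g → M * P = P * M := by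
    intro P hP
    have hdet : P.det * g.det * P.det = g.det := by
      have h := congrArg Matrix.det hP
      rwa [det_mul, det_mul, det_transpose] at h
    have hdP : IsUnit P.det := by
      rw [isUnit_iff_ne_zero]
      intro h0
      rw [h0, zero_mul, mul_zero] at hdet
      exact hgne hdet.symm
    have hPinv : P * P⁻¹ = 1 := mul_nonsing_inv P hdP
    have hNP : Pᵀ * N * P = N := by
      apply myTrace_ext
      intro A
      have h1 := hf A P hP
      rw [hN, hN] at h1
      calc (Pᵀ * N * P * A).trace = (Pᵀ * (N * P * A)).trace := by
            simp only [Matrix.mul_assoc]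
        _ = ((N * P * A) * Pᵀ).trace := trace_mul_comm _ _
        _ = (N * (P * A * Pᵀ)).trace := by simp only [Matrix.mul_assoc]
        _ = (N * A).trace := h1
    have hPtg : Pᵀ * g = g * P⁻¹ := by
      calc Pᵀ * g = Pᵀ * g * (P * P⁻¹) := by rw [hPinv, Matrix.mul_one]
        _ = (Pᵀ * g * P) * P⁻¹ := by simp only [Matrix.mul_assoc]
        _ = g * P⁻¹ := by rw [hP]
    have h2 : g * (P⁻¹ * M * P) = g * M := by
      calc g * (P⁻¹ * M * P) = (g * P⁻¹) * M * P := by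
            simp only [Matrix.mul_assoc]
        _ = (Pᵀ * g) * M * P := by rw [hPtg]
        _ = Pᵀ * (g * M) * P := by simp only [Matrix.mul_assoc]
        _ = Pᵀ * N * P := by rw [← hNM]
        _ = N := hNP
        _ = g * M := hNM
    have h3 : P⁻¹ * M * P = M := by
      have := congrArg (fun X => g⁻¹ * X) h2
      simpa [← Matrix.mul_assoc, hginv, Matrix.one_mul] using this
    calc M * P = (P * P⁻¹) * M * P := by rw [hPinv, Matrix.one_mul]
      _ = P * (P⁻¹ * M * P) := by simp only [Matrix.mul_assoc]
      _ = P * M := by rw [h3]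
  -- M commutes with vecMulVec v (g *ᵥ v) for anisotropic v
  have hrefl : ∀ v : Fin n → ℝ, v ⬝ᵥ g *ᵥ v ≠ 0 →
      M * vecMulVec v (g *ᵥ v) = vecMulVec v (g *ᵥ v) * M := by
    intro v hq
    have hP := myRefl g hg v hq
    have h := hcomm _ hP
    set s := 2 / (v ⬝ᵥ g *ᵥ v) with hs
    have hsne : s ≠ 0 := by
      rw [hs]
      exact div_ne_zero two_ne_zero hq
    rw [mul_sub, sub_mul, Matrix.mul_one, Matrix.one_mul, Matrix.mul_smul,
      Matrix.smul_mul, sub_right_inj] at h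
    exact smul_right_injective _ hsne h
  -- there is an anisotropic vector
  have hu : ∃ u : Fin n → ℝ, u ⬝ᵥ g *ᵥ u ≠ 0 := by
    by_contra h
    push_neg at h
    have hg0 : g = 0 := by
      ext i j
      have hii := h (Pi.single i 1)
      have hjj := h (Pi.single j 1)
      have hij := h (Pi.single i 1 + Pi.single j 1)
      have hsij := hsym (Pi.single j 1) (Pi.single i 1)
      simp only [mulVec_add, dotProduct_add, add_dotProduct] at hij
      rw [hii, hjj] at hij
      have hgij : Pi.single (M := fun _ => ℝ) i 1 ⬝ᵥ g *ᵥ Pi.single j 1 = g i j := by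
        simp [dotProduct, mulVec, Pi.single_apply, Finset.sum_ite_eq]
      have hgji : Pi.single (M := fun _ => ℝ) j 1 ⬝ᵥ g *ᵥ Pi.single i 1 = g j i := by
        simp [dotProduct, mulVec, Pi.single_apply, Finset.sum_ite_eq]
      rw [hgij, hgji] at hij
      rw [hgij, hgji] at hsij
      have : g i j + g j i = 0 := by linarith
      rw [← hsij] at this
      have : g i j = 0 := by linarith
      simpa using this
    rw [hg0] at hgne
    simp at hgne
  obtain ⟨u, huq⟩ := hu
  -- extend the commutation to all v
  have hall : ∀ v : Fin n → ℝ,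
      M * vecMulVec v (g *ᵥ v) = vecMulVec v (g *ᵥ v) * M := by
    intro v
    by_cases hqv : v ⬝ᵥ g *ᵥ v ≠ 0
    · exact hrefl v hqv
    push_neg at hqv
    set qu := u ⬝ᵥ g *ᵥ u with hqu
    set r := v ⬝ᵥ g *ᵥ u with hr
    -- the quadratic q(v + t u)
    have hqexp : ∀ t : ℝ, (v + t • u) ⬝ᵥ g *ᵥ (v + t • u)
        = qu * t^2 + (2*r) * t + (v ⬝ᵥ g *ᵥ v) := by
      intro t
      have hrs : u ⬝ᵥ g *ᵥ v = r := by rw [hr, hsym]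
      simp only [mulVec_add, mulVec_smul, dotProduct_add, add_dotProduct,
        dotProduct_smul, smul_dotProduct, smul_eq_mul, hrs]
      rw [hr, hqu]
      ring
    have hWexp : ∀ t : ℝ, vecMulVec (v + t • u) (g *ᵥ (v + t • u))
        = vecMulVec v (g *ᵥ v)
          + t • (vecMulVec v (g *ᵥ u) + vecMulVec u (g *ᵥ v))
          + (t^2) • vecMulVec u (g *ᵥ u) := by
      intro t
      ext i j
      simp only [vecMulVec_apply, mulVec_add, mulVec_smul, Pi.add_apply, Pi.smul_apply,
        Matrix.add_apply, Matrix.smul_apply, smul_eq_mul]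
      ring
    obtain ⟨t₁, t₂, ht12, hp1, hp2⟩ := myTwo (a := qu) (b := 2*r) (c := v ⬝ᵥ g *ᵥ v) huq
    set Y := vecMulVec v (g *ᵥ u) + vecMulVec u (g *ᵥ v) with hY
    set Wv := vecMulVec v (g *ᵥ v) with hWv
    set Wu := vecMulVec u (g *ᵥ u) with hWu
    have hMu : M * Wu = Wu * M := hrefl u huq
    have key : ∀ t : ℝ, qu*t^2 + (2*r)*t + (v ⬝ᵥ g *ᵥ v) ≠ 0 →
        M * Wv + t • (M * Y) = Wv * M + t • (Y * M) := by
      intro t hpt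
      have hq : (v + t • u) ⬝ᵥ g *ᵥ (v + t • u) ≠ 0 := by
        rw [hqexp t]; exact hpt
      have h := hrefl _ hq
      rw [hWexp t] at h
      simp only [mul_add, add_mul, Matrix.mul_smul, Matrix.smul_mul] at h
      rw [hMu] at h
      exact add_right_cancel h
    have e1 := key t₁ hp1
    have e2 := key t₂ hp2
    have hYc : M * Y = Y * M := by
      have h' : (t₁ - t₂) • (M * Y) = (t₁ - t₂) • (Y * M) := by
        calc (t₁ - t₂) • (M * Y) = (M * Wv + t₁ • (M * Y)) - (M * Wv + t₂ • (M * Y)) := by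
              rw [sub_smul]; abel
          _ = (Wv * M + t₁ • (Y * M)) - (Wv * M + t₂ • (Y * M)) := by rw [e1, e2]
          _ = (t₁ - t₂) • (Y * M) := by rw [sub_smul]; abel
      exact smul_right_injective _ (sub_ne_zero.mpr ht12) h'
    have := e1
    rw [hYc] at this
    exact add_right_cancel this
  -- every vector is an eigenvector of M
  have heig : ∀ v : Fin n → ℝ, ∃ c : ℝ, M *ᵥ v = c • v := by
    intro v
    by_cases hv : v = 0
    · exact ⟨0, by simp [hv]⟩
    have hgv : g *ᵥ v ≠ 0 := by
      intro h0
      apply hv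
      have : (g⁻¹ * g) *ᵥ v = g⁻¹ *ᵥ (g *ᵥ v) := by rw [← mulVec_mulVec]
      rw [hginv, h0] at this
      simpa using this
    obtain ⟨j, hj⟩ := Function.ne_iff.mp hgv
    simp only [Pi.zero_apply] at hj
    set s := ∑ k, (g *ᵥ v) k * M k j with hs
    refine ⟨s / (g *ᵥ v) j, funext fun i => ?_⟩
    have h := congrFun (congrFun (hall v) i) j
    have hL : (M * vecMulVec v (g *ᵥ v)) i j = (M *ᵥ v) i * (g *ᵥ v) j := by
      simp only [Matrix.mul_apply, vecMulVec_apply, Matrix.mulVec, dotProduct]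
      rw [Finset.sum_mul]
      exact Finset.sum_congr rfl (fun k _ => by ring)
    have hR : (vecMulVec v (g *ᵥ v) * M) i j = v i * s := by
      simp only [Matrix.mul_apply, vecMulVec_apply, hs]
      rw [Finset.mul_sum]
      exact Finset.sum_congr rfl (fun k _ => by ring)
    rw [hL, hR] at h
    have : (M *ᵥ v) i = v i * s / (g *ᵥ v) j := by
      field_simp
      linear_combination h
    rw [this]
    simp only [Pi.smul_apply, smul_eq_mul]
    ring
  -- conclude M is scalar
  have hi0 : 0 < n := lt_of_lt_of_le two_pos hn
  set i0 : Fin n := ⟨0, hi0⟩ with hi0def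
  obtain ⟨c, hc⟩ := heig (Pi.single i0 (1:ℝ))
  have hMc : M = c • (1 : Matrix (Fin n) (Fin n) ℝ) := by
    have hcol : ∀ j : Fin n, ∃ cj : ℝ, (∀ i, M i j = cj * (Pi.single j (1:ℝ) : Fin n → ℝ) i) ∧ cj = c := by
      intro j
      obtain ⟨cj, hcj⟩ := heig (Pi.single j (1:ℝ))
      have hMij : ∀ i, M i j = cj * (Pi.single j (1:ℝ) : Fin n → ℝ) i := by
        intro i
        have h := congrFun hcj i
        simp only [Pi.smul_apply, smul_eq_mul] at h
        rw [← h]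
        simp [mulVec, dotProduct, Pi.single_apply, Finset.sum_ite_eq]
      refine ⟨cj, hMij, ?_⟩
      by_cases hj : j = i0
      · subst hj
        have h0 := congrFun hc i0
        have h1 := congrFun hcj i0
        simp only [Pi.smul_apply, smul_eq_mul, Pi.single_eq_same, mul_one] at h0 h1
        rw [← h0, ← h1]
      · obtain ⟨d, hd⟩ := heig (Pi.single i0 (1:ℝ) + Pi.single j (1:ℝ))
        rw [mulVec_add, hc, hcj] at hd
        have hat0 := congrFun hd i0
        have hatj := congrFun hd j
        have hj' : i0 ≠ j := fun h => hj h.symm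
        simp only [Pi.add_apply, Pi.smul_apply, smul_eq_mul, Pi.single_eq_same,
          Pi.single_eq_of_ne hj, Pi.single_eq_of_ne hj'] at hat0 hatj
        have hc0 : c = d := by linarith
        have hcj0 : cj = d := by linarith
        rw [hc0, hcj0]
    ext i j
    obtain ⟨cj, hMij, hcjc⟩ := hcol j
    rw [hMij i, hcjc]
    by_cases hij : i = j
    · subst hij
      simp
    · have hij' : j ≠ i := fun h => hij h.symm
      have h1 : (Pi.single j (1:ℝ) : Fin n → ℝ) i = 0 := Pi.single_eq_of_ne hij 1
      rw [h1, Matrix.smul_apply, Matrix.one_apply_ne hij]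
      simp
  refine ⟨c, fun A => ?_⟩
  rw [hN, hNM, hMc]
  rw [Matrix.mul_smul, Matrix.mul_one, Matrix.smul_mul, trace_smul]
  rw [trace_mul_comm]
  simp
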